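/- For every DMG G = (V, D, B) there exists an adjacent separating system on (V, D) with at most 2·χ_s(G^u) elements, where χ_s(G^u) is the strong edge chromatic number of the directed skeleton G^u. -/

import Mathlib

universe u

/-- A directed mixed graph (DMG): directed edges `D` (no self-loops) and
bidirected edges `B` (symmetric, no self-loops). -/
structure DMG (V : Type u) where
  D : V → V → Prop
  B : V → V → Prop
  D_irrefl : ∀ x, ¬ D x x
  B_symm : ∀ x y, B x y → B y x
  B_irrefl : ∀ x, ¬ B x x

namespace DMG

variable {V : Type u}

/-- `x` is an ancestor of `y` (reflexive-transitive closure of `D`). -/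
def anc (G : DMG V) (x y : V) : Prop := Relation.ReflTransGen G.D x y

/-- ancestors of a set of vertices -/
def ancSet (G : DMG V) (W : Set V) : Set V := {x | ∃ y ∈ W, G.anc x y}

/-- the strongly connected component of `x` -/
def scc (G : DMG V) (x : V) : Set V := {y | G.anc x y ∧ G.anc y x}

/-- parents of a vertex -/
def pa (G : DMG V) (x : V) : Set V := {y | G.D y x}

/-- parents of a set of vertices -/
def paSet (G : DMG V) (W : Set V) : Set V := {y | ∃ x ∈ W, G.D y x}

/-- non-adjacent bidirected edges -/
def BN (G : DMG V) : V → V → Prop := fun x y => G.B x y ∧ ¬ G.D x y ∧ ¬ G.D y x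

/-- the intervened graph `G_Ī` -/
def intervene (G : DMG V) (I : Set V) : DMG V where
  D a b := G.D a b ∧ b ∉ I
  B a b := G.B a b ∧ a ∉ I ∧ b ∉ I
  D_irrefl := fun x h => G.D_irrefl x h.1
  B_symm := fun x y h => ⟨G.B_symm x y h.1, h.2.2, h.2.1⟩
  B_irrefl := fun x h => G.B_irrefl x h.1

/-- the directed skeleton `G^u` -/
def skel (G : DMG V) : SimpleGraph V where
  Adj x y := x ≠ y ∧ (G.D x y ∨ G.D y x)
  symm := ⟨fun _ _ h => ⟨h.1.symm, h.2.elim Or.inr Or.inl⟩⟩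
  loopless := ⟨fun _ h => h.1 rfl⟩

/-- the undirected component graph `G^{uc}` -/
def ucomp (G : DMG V) : SimpleGraph V where
  Adj x y := x ≠ y ∧ ¬ G.D x y ∧ ¬ G.D y x
  symm := ⟨fun _ _ h => ⟨h.1.symm, h.2.2, h.2.1⟩⟩
  loopless := ⟨fun _ h => h.1 rfl⟩

/-- `S` is an SCC of `G` -/
def isSCC (G : DMG V) (S : Set V) : Prop := ∃ x, S = G.scc x

/-- `S` is an SCC-ancestor of the distinct SCC `S'` -/
def sccAncestor (G : DMG V) (S S' : Set V) : Prop :=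
  S ≠ S' ∧ ∃ x ∈ S, ∃ y ∈ S', G.anc x y

/-- `S` is a `k`-order SCC-ancestor of `S'`: there is a directed path from a
vertex of `S` to a vertex of `S'` passing through at most `k-1` SCCs other than
`S` and `S'`. -/
def kOrderSCCAnc (G : DMG V) (k : ℕ) (S S' : Set V) : Prop :=
  S ≠ S' ∧ ∃ p : List V, p ≠ [] ∧ p.Chain' G.D ∧
    (∃ x ∈ S, p.head? = some x) ∧ (∃ y ∈ S', p.getLast? = some y) ∧
    ({C : Set V | ∃ z ∈ p, z ∉ S ∧ z ∉ S' ∧ C = G.scc z}).ncard ≤ k - 1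

/-- `G` has SCC-Anc length `l` : `l` is the least integer such that every
SCC-ancestor of any SCC is an `l`-order SCC-ancestor. -/
def sccAncLength (G : DMG V) (l : ℕ) : Prop :=
  IsLeast {m | ∀ S S' : Set V, G.isSCC S → G.isSCC S' →
    G.sccAncestor S' S → G.kOrderSCCAnc m S' S} l

/-- membership in the first layer `𝒯_1` of the SCC-Anc partition -/
def sccLayer0 (G : DMG V) (S : Set V) : Prop :=
  G.isSCC S ∧ ¬ ∃ S' : Set V, G.isSCC S' ∧ G.sccAncestor S' S

/-- `m` is the least order at which `S'` is an SCC-ancestor of `S` -/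
def minOrd (G : DMG V) (S' S : Set V) (m : ℕ) : Prop :=
  IsLeast {j | G.kOrderSCCAnc j S' S} m

/-- membership in the layer `𝒯_{i+1}` of the SCC-Anc partition (0-indexed `i`):
for `i ≥ 1`, `S ∈ 𝒯_{i+1}` iff some SCC of `𝒯_1` is an `i`-order SCC-ancestor
of `S` and no SCC of `𝒯_1` is only an `r`-order SCC-ancestor of `S` for `r > i`,
i.e. `i` is the largest minimal order of a `𝒯_1` SCC-ancestor of `S`. -/
def sccLayer (G : DMG V) (i : ℕ) (S : Set V) : Prop :=
  if i = 0 then G.sccLayer0 S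
  else G.isSCC S ∧ IsGreatest {m | ∃ S' : Set V, G.sccLayer0 S' ∧ G.minOrd S' S m} i

/-- `T_{k+1}` (0-indexed `k`): the set of vertices in layers `𝒯_1, …, 𝒯_k` -/
def TUnion (G : DMG V) (k : ℕ) : Set V :=
  {v | ∃ i < k, ∃ S : Set V, G.sccLayer i S ∧ v ∈ S}

/-- SCC-Anc separating system on `(V, 𝕋^G)` (layers 0-indexed by `0,…,l`) -/
def SCCAncSepSystem (G : DMG V) (l : ℕ) (𝓘 : Set (Set V)) : Prop :=
  ∀ k ≤ l, ∀ S : Set V, G.sccLayer k S → ∀ X ∈ S,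
    ∃ I ∈ 𝓘, (G.TUnion k ∪ S) \ {X} ⊆ I ∧ X ∉ I

/-- `G` with the directed edge `(F, S)` removed -/
def removeDir (G : DMG V) (F S : V) : DMG V where
  D a b := G.D a b ∧ ¬(a = F ∧ b = S)
  B := G.B
  D_irrefl := fun x h => G.D_irrefl x h.1
  B_symm := G.B_symm
  B_irrefl := fun x h => G.B_irrefl x h

/-- `G` with the bidirected edge `{S, R}` removed -/
def removeBi (G : DMG V) (S R : V) : DMG V where
  D := G.D
  B a b := G.B a b ∧ ¬((a = S ∧ b = R) ∨ (a = R ∧ b = S))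
  D_irrefl := G.D_irrefl
  B_symm := by
    intro x y h
    refine ⟨G.B_symm x y h.1, ?_⟩
    rintro (⟨h1, h2⟩ | ⟨h1, h2⟩)
    · exact h.2 (Or.inr ⟨h2, h1⟩)
    · exact h.2 (Or.inl ⟨h2, h1⟩)
  B_irrefl := fun x h => G.B_irrefl x h.1

end DMG

/-- kinds of edges along a mixed path: forward directed, backward directed, bidirected -/
inductive EKind | fwd | bwd | bi

/-- a mixed path skeleton: `k ≥ 1` steps, vertices `Z 0, …, Z k`, edges `E 0, …, E (k-1)`
(step `i` joins `Z i` and `Z (i+1)`). -/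
structure MPath (V : Type u) where
  k : ℕ
  Z : ℕ → V
  E : ℕ → EKind
  hk : 1 ≤ k

namespace MPath

variable {V : Type u}

/-- the path is a path of `G` -/
def valid (p : MPath V) (G : DMG V) : Prop :=
  ∀ i < p.k,
    (p.E i = EKind.fwd → G.D (p.Z i) (p.Z (i+1))) ∧
    (p.E i = EKind.bwd → G.D (p.Z (i+1)) (p.Z i)) ∧
    (p.E i = EKind.bi → G.B (p.Z i) (p.Z (i+1)))

/-- the step has an arrowhead at its second endpoint -/
def headAtSnd : EKind → Prop
  | EKind.fwd => True
  | EKind.bi => True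
  | EKind.bwd => False

/-- the step has an arrowhead at its first endpoint -/
def headAtFst : EKind → Prop
  | EKind.bwd => True
  | EKind.bi => True
  | EKind.fwd => False

/-- `Z i` is a collider on the path (meaningful for `1 ≤ i ≤ k-1`) -/
def collider (p : MPath V) (i : ℕ) : Prop :=
  headAtSnd (p.E (i-1)) ∧ headAtFst (p.E i)

end MPath

/-- the separation rule: `d`-separation or `σ`-separation -/
inductive SepRule | d | s

/-- the path between `x` and `y` is `r`-blocked by `S` in `G` -/
def MPath.blocked {V : Type u} (p : MPath V) (G : DMG V) (r : SepRule) (S : Set V)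
    (x y : V) : Prop :=
  ∃ i, 1 ≤ i ∧ i < p.k ∧
    ((p.collider i ∧ p.Z i ∉ G.ancSet (S ∪ {x, y})) ∨
     (¬ p.collider i ∧ p.Z i ∈ S ∧
       (r = SepRule.d ∨
        (p.E i = EKind.fwd ∧ p.Z (i+1) ∉ G.scc (p.Z i)) ∨
        (p.E (i-1) = EKind.bwd ∧ p.Z (i-1) ∉ G.scc (p.Z i)))))

/-- `S` `r`-separates `x` and `y` in `G` -/
def rSep {V : Type u} (G : DMG V) (r : SepRule) (S : Set V) (x y : V) : Prop :=
  ∀ p : MPath V, p.valid G → p.Z 0 = x → p.Z p.k = y → p.blocked G r S x y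

/-- the `r`-independence model of `G` -/
def IM {V : Type u} (G : DMG V) (r : SepRule) : Set (V × V × Set V) :=
  {t | t.1 ≠ t.2.1 ∧ t.1 ∉ t.2.2 ∧ t.2.1 ∉ t.2.2 ∧ rSep G r t.2.2 t.1 t.2.1}

/-- `G` and `H` are `𝓘`-`r`-Markov equivalent -/
def IMEquiv {V : Type u} (G H : DMG V) (r : SepRule) (𝓘 : Set (Set V)) : Prop :=
  ∀ I ∈ 𝓘, IM (G.intervene I) r = IM (H.intervene I) r

/-- a `d`-inducing path between `x` and `y`: every collider is an ancestor of `{x,y}` -/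
def MPath.dInducing {V : Type u} (p : MPath V) (G : DMG V) (x y : V) : Prop :=
  ∀ i, 1 ≤ i → i < p.k → p.collider i → p.Z i ∈ G.ancSet {x, y}

/-- a `σ`-inducing path between `x` and `y` -/
def MPath.sInducing {V : Type u} (p : MPath V) (G : DMG V) (x y : V) : Prop :=
  p.dInducing G x y ∧
  ∀ i, 1 ≤ i → i < p.k → ¬ p.collider i →
    (p.E (i-1) = EKind.bwd → p.Z (i-1) ∈ G.scc (p.Z i)) ∧
    (p.E i = EKind.fwd → p.Z (i+1) ∈ G.scc (p.Z i))

/-- an `r`-inducing path -/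
def MPath.rInducing {V : Type u} (p : MPath V) (G : DMG V) (r : SepRule) (x y : V) : Prop :=
  match r with
  | SepRule.d => p.dInducing G x y
  | SepRule.s => p.sInducing G x y

/-- colored separating system on `(V, C)` -/
def ColoredSepSystem {V : Type u} {γ : Type*} (C : V → γ) (𝓘 : Set (Set V)) : Prop :=
  ∀ X Y : V, C X ≠ C Y → ∃ I ∈ 𝓘, X ∈ I ∧ Y ∉ I

/-- non-adjacent separating system on `(V, D)` -/
def NonAdjSepSystem {V : Type u} (G : DMG V) (𝓘 : Set (Set V)) : Prop :=
  ∀ X Y : V, X ≠ Y → ¬ G.D X Y → ¬ G.D Y X →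
    ∃ I ∈ 𝓘, G.paSet {X, Y} ⊆ I ∧ X ∉ I ∧ Y ∉ I

/-- adjacent separating system on `(V, D)` -/
def AdjSepSystem {V : Type u} (G : DMG V) (𝓘 : Set (Set V)) : Prop :=
  ∀ X Y : V, G.D X Y → ¬ G.D Y X →
    (∃ I ∈ 𝓘, G.paSet {X, Y} \ {X, Y} ⊆ I ∧ X ∉ I ∧ Y ∉ I) ∧
    (∃ I' ∈ 𝓘, G.paSet {X, Y} \ {Y} ⊆ I' ∧ X ∈ I' ∧ Y ∉ I')

/-- the minimum edge clique cover number `cc(H)` -/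
noncomputable def ecc {V : Type u} (H : SimpleGraph V) : ℕ :=
  sInf {K | ∃ C : Fin K → Set V, (∀ k, H.IsClique (C k)) ∧
    ∀ x y : V, H.Adj x y → ∃ k, x ∈ C k ∧ y ∈ C k}

/-- two edges that must receive different colors in a strong edge coloring:
they are distinct and share an endpoint or are both incident to a common third edge -/
def StrongAdjE {V : Type u} (H : SimpleGraph V) (e₁ e₂ : Sym2 V) : Prop :=
  e₁ ≠ e₂ ∧ ((∃ v, v ∈ e₁ ∧ v ∈ e₂) ∨
    ∃ e₃ ∈ H.edgeSet, e₃ ≠ e₁ ∧ e₃ ≠ e₂ ∧ (∃ v, v ∈ e₁ ∧ v ∈ e₃) ∧ ∃ u, u ∈ e₂ ∧ u ∈ e₃)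

/-- the strong edge chromatic number `χ_s(H)` -/
noncomputable def strongChrom {V : Type u} (H : SimpleGraph V) : ℕ :=
  sInf {K | ∃ f : Sym2 V → Fin K, ∀ e₁ ∈ H.edgeSet, ∀ e₂ ∈ H.edgeSet,
    StrongAdjE H e₁ e₂ → f e₁ ≠ f e₂}
/-- a strong coloring gives different colors to edges sharing an endpoint -/
lemma shared_clash {V : Type u} {K : ℕ} (H : SimpleGraph V) (f : Sym2 V → Fin K)
    (hf : ∀ e₁ ∈ H.edgeSet, ∀ e₂ ∈ H.edgeSet, StrongAdjE H e₁ e₂ → f e₁ ≠ f e₂)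
    {e₁ e₂ : Sym2 V} (h1 : e₁ ∈ H.edgeSet) (h2 : e₂ ∈ H.edgeSet)
    (hne : e₁ ≠ e₂) {v : V} (hv1 : v ∈ e₁) (hv2 : v ∈ e₂) :
    f e₁ ≠ f e₂ :=
  hf e₁ h1 e₂ h2 ⟨hne, Or.inl ⟨v, hv1, hv2⟩⟩

/-- core combinatorial fact: if `s(X,Y)` and `s(Z,W)` both lie in the skeleton,
`Z ∉ {X,Y}`, and there is a skeleton edge from `Z` to some endpoint `x` of
`s(X,Y)`, then the two edges get different colors in a strong edge coloring. -/
lemma far_clash {V : Type u} {K : ℕ} (H : SimpleGraph V) (f : Sym2 V → Fin K)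
    (hf : ∀ e₁ ∈ H.edgeSet, ∀ e₂ ∈ H.edgeSet, StrongAdjE H e₁ e₂ → f e₁ ≠ f e₂)
    {X Y Z W : V} (hXY : H.Adj X Y) (hZW : H.Adj Z W)
    (hZX : Z ≠ X) (hZY : Z ≠ Y)
    {x : V} (hx : x = X ∨ x = Y) (hZx : H.Adj Z x) :
    f s(X, Y) ≠ f s(Z, W) := by
  have he1 : s(X, Y) ∈ H.edgeSet := hXY
  have he2 : s(Z, W) ∈ H.edgeSet := hZW
  have hxe1 : x ∈ s(X, Y) := by
    rcases hx with rfl | rfl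
    · exact Sym2.mem_mk_left _ _
    · exact Sym2.mem_mk_right _ _
  have hne12 : s(X, Y) ≠ s(Z, W) := by
    intro h
    have : Z ∈ s(X, Y) := h ▸ Sym2.mem_mk_left Z W
    rcases Sym2.mem_iff.mp this with h' | h'
    · exact hZX h'
    · exact hZY h'
  refine hf _ he1 _ he2 ⟨hne12, ?_⟩
  by_cases h32 : s(Z, x) = s(Z, W)
  · exact Or.inl ⟨x, hxe1, h32 ▸ Sym2.mem_mk_right Z x⟩
  · refine Or.inr ⟨s(Z, x), hZx, ?_, h32, ⟨x, hxe1, Sym2.mem_mk_right Z x⟩,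
      ⟨Z, Sym2.mem_mk_left Z W, Sym2.mem_mk_left Z x⟩⟩
    intro h
    have : Z ∈ s(X, Y) := h ▸ Sym2.mem_mk_left Z x
    rcases Sym2.mem_iff.mp this with h' | h'
    · exact hZX h'
    · exact hZY h'

/-- there is an adjacent separating system on `(V, D)` with at most
`2·χ_s(G^u)` elements. -/
theorem adj_separating_system_le_strongChrom {V : Type u} [Fintype V] (G : DMG V) :
    ∃ 𝓘 : Set (Set V), 𝓘.Finite ∧ AdjSepSystem G 𝓘 ∧
      𝓘.ncard ≤ 2 * strongChrom G.skel := by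
  classical
  set K := strongChrom G.skel with hKdef
  have hne : {K | ∃ f : Sym2 V → Fin K, ∀ e₁ ∈ G.skel.edgeSet, ∀ e₂ ∈ G.skel.edgeSet,
      StrongAdjE G.skel e₁ e₂ → f e₁ ≠ f e₂}.Nonempty := by
    refine ⟨Fintype.card (Sym2 V), Fintype.equivFin (Sym2 V), ?_⟩
    intro e₁ _ e₂ _ h hfe
    exact h.1 ((Fintype.equivFin (Sym2 V)).injective hfe)
  have hmem : K ∈ {K | ∃ f : Sym2 V → Fin K, ∀ e₁ ∈ G.skel.edgeSet,
      ∀ e₂ ∈ G.skel.edgeSet, StrongAdjE G.skel e₁ e₂ → f e₁ ≠ f e₂} := Nat.sInf_mem hne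
  obtain ⟨f, hf⟩ := hmem
  -- endpoints of colour-k skeleton edges
  let Vk : Fin K → Set V := fun k => {v | ∃ w, G.skel.Adj v w ∧ f s(v, w) = k}
  -- heads/tails of strictly-directed colour-k edges
  let heads : Fin K → Set V := fun k => {y | ∃ x, G.D x y ∧ ¬ G.D y x ∧ f s(x, y) = k}
  let tails : Fin K → Set V := fun k => {x | ∃ y, G.D x y ∧ ¬ G.D y x ∧ f s(x, y) = k}
  let I1 : Fin K → Set V := fun k => G.paSet (Vk k) \ Vk k
  let I2 : Fin K → Set V := fun k => (G.paSet (Vk k) ∪ tails k) \ heads k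
  refine ⟨Set.range I1 ∪ Set.range I2,
    (Set.finite_range I1).union (Set.finite_range I2), ?_, ?_⟩
  · intro X Y hDXY hDYX
    have hXneY : X ≠ Y := fun h => G.D_irrefl X (h ▸ hDXY)
    have hadj : G.skel.Adj X Y := ⟨hXneY, Or.inl hDXY⟩
    set k := f s(X, Y) with hk
    have hXVk : X ∈ Vk k := ⟨Y, hadj, rfl⟩
    have hYVk : Y ∈ Vk k := ⟨X, hadj.symm, by rw [Sym2.eq_swap]⟩
    -- X is not a head of colour k
    have hXh : X ∉ heads k := by
      rintro ⟨W, hDWX, hDXW, hcol⟩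
      have hWX : W ≠ X := fun h => G.D_irrefl X (h ▸ hDWX)
      have hadj2 : G.skel.Adj W X := ⟨hWX, Or.inl hDWX⟩
      have hne12 : s(X, Y) ≠ s(W, X) := by
        intro h
        rcases Sym2.eq_iff.mp h with ⟨rfl, rfl⟩ | ⟨-, rfl⟩
        · exact hXneY rfl
        · exact hDYX hDWX
      exact shared_clash G.skel f hf hadj hadj2 hne12
        (Sym2.mem_mk_left X Y) (Sym2.mem_mk_right W X) (hcol.symm ▸ hk)
    -- any parent of {X,Y} other than Y is not a head of colour k
    have hZh : ∀ Z, Z ∈ G.paSet {X, Y} → Z ≠ Y → Z ∉ heads k := by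
      rintro Z ⟨x, hxmem, hDZx⟩ hZY ⟨W, hDWZ, hDZW, hcol⟩
      by_cases hZX : Z = X
      · subst hZX; exact hXh ⟨W, hDWZ, hDZW, hcol⟩
      · have hWZ : W ≠ Z := fun h => G.D_irrefl Z (h ▸ hDWZ)
        have hadj2 : G.skel.Adj Z W := ⟨fun h => hWZ h.symm, Or.inr hDWZ⟩
        have hZx : Z ≠ x := by
          rcases hxmem with rfl | hx
          · exact hZX
          · rcases hx with rfl; exact hZY
        have hxXY : x = X ∨ x = Y := by
          rcases hxmem with rfl | hx
          · exact Or.inl rfl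
          · rcases hx with rfl; exact Or.inr rfl
        have hadjZx : G.skel.Adj Z x := ⟨hZx, Or.inl hDZx⟩
        refine far_clash G.skel f hf hadj hadj2 hZX hZY hxXY hadjZx ?_
        rw [hk.symm, show f s(Z, W) = f s(W, Z) by rw [Sym2.eq_swap], hcol]
    -- parents of {X,Y} lie in paSet (Vk k), and avoid Vk k when outside {X,Y}
    have hpa : ∀ Z, Z ∈ G.paSet {X, Y} → Z ∈ G.paSet (Vk k) := by
      rintro Z ⟨x, hxmem, hDZx⟩
      rcases hxmem with rfl | hx
      · exact ⟨x, hXVk, hDZx⟩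
      · rcases hx with rfl; exact ⟨x, hYVk, hDZx⟩
    have hnVk : ∀ Z, Z ∈ G.paSet {X, Y} → Z ≠ X → Z ≠ Y → Z ∉ Vk k := by
      rintro Z ⟨x, hxmem, hDZx⟩ hZX hZY ⟨W, hZW, hcol⟩
      have hxXY : x = X ∨ x = Y := by
        rcases hxmem with rfl | hx
        · exact Or.inl rfl
        · rcases hx with rfl; exact Or.inr rfl
      have hZx : Z ≠ x := by rcases hxXY with rfl | rfl <;> assumption
      have hadjZx : G.skel.Adj Z x := ⟨hZx, Or.inl hDZx⟩
      exact far_clash G.skel f hf hadj hZW hZX hZY hxXY hadjZx (hk ▸ hcol.symm ▸ rfl)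
    constructor
    · refine ⟨I1 k, Or.inl ⟨k, rfl⟩, ?_, ?_, ?_⟩
      · rintro Z ⟨hZpa, hZXY⟩
        have hZX : Z ≠ X := fun h => hZXY (Or.inl h)
        have hZY : Z ≠ Y := fun h => hZXY (Or.inr h)
        exact ⟨hpa Z hZpa, hnVk Z hZpa hZX hZY⟩
      · exact fun h => h.2 hXVk
      · exact fun h => h.2 hYVk
    · refine ⟨I2 k, Or.inr ⟨k, rfl⟩, ?_, ?_, ?_⟩
      · rintro Z ⟨hZpa, hZY'⟩
        have hZY : Z ≠ Y := by simpa using hZY'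
        exact ⟨Or.inl (hpa Z hZpa), hZh Z hZpa hZY⟩
      · exact ⟨Or.inr ⟨Y, hDXY, hDYX, rfl⟩, hXh⟩
      · exact fun h => h.2 ⟨X, hDXY, hDYX, rfl⟩
  · have h1 : (Set.range I1).ncard ≤ K := by
      rw [← Set.image_univ]
      calc (I1 '' Set.univ).ncard ≤ (Set.univ : Set (Fin K)).ncard :=
            Set.ncard_image_le Set.finite_univ
        _ = K := by simp [Set.ncard_univ]
    have h2 : (Set.range I2).ncard ≤ K := by
      rw [← Set.image_univ]
      calc (I2 '' Set.univ).ncard ≤ (Set.univ : Set (Fin K)).ncard :=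
            Set.ncard_image_le Set.finite_univ
        _ = K := by simp [Set.ncard_univ]
    calc (Set.range I1 ∪ Set.range I2).ncard
        ≤ (Set.range I1).ncard + (Set.range I2).ncard := Set.ncard_union_le _ _
      _ ≤ K + K := Nat.add_le_add h1 h2
      _ = 2 * K := (two_mul K).symm
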